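/- Let d ≥ 1 and let P be a finite set of (distinct) points in Euclidean d-space, and let k be an integer with 4 ≤ k ≤ |P|. For a ≠ b in P write P'_{a,b} = {p ∈ P : dist(p,a) ≥ dist(a,b) and dist(p,b) ≥ dist(a,b)}. Then disp(P,k) equals the maximum of dist(a,b) over all pairs a ≠ b in P for which there exists a (k−2)-element subset K' ⊆ P'_{a,b} with minDist(K') ≥ dist(a,b); moreover the set of such pairs is nonempty. (This identity expresses the correctness of the recursive dispersion algorithm.) -/

import Mathlib

open scoped Classical

/-- The minimum inter-point distance of a finite point set (with at least two points,
the infimum is attained). -/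
noncomputable def minDist {d : ℕ} (S : Finset (EuclideanSpace ℝ (Fin d))) : ℝ :=
  sInf {r : ℝ | ∃ p ∈ S, ∃ q ∈ S, p ≠ q ∧ r = dist p q}

/-- The `k`-dispersion value of a finite point set `P`: the maximum of `minDist S`
over all `k`-element subsets `S ⊆ P`. -/
noncomputable def disp {d : ℕ} (P : Finset (EuclideanSpace ℝ (Fin d))) (k : ℕ) : ℝ :=
  sSup {r : ℝ | ∃ S ⊆ P, S.card = k ∧ r = minDist S}

/-- The pair `(a, b)` is "good" for the recursive algorithm: there is a `(k-2)`-element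
subset of `P'_{a,b} = {p ∈ P : dist p a ≥ dist a b ∧ dist p b ≥ dist a b}` all of whose
pairwise distances are at least `dist a b`. -/
def GoodPair {d : ℕ} (P : Finset (EuclideanSpace ℝ (Fin d))) (k : ℕ)
    (a b : EuclideanSpace ℝ (Fin d)) : Prop :=
  ∃ K' ⊆ P.filter fun p => dist a b ≤ dist p a ∧ dist a b ≤ dist p b,
    K'.card = k - 2 ∧ dist a b ≤ minDist K'

lemma distSet_finite {d : ℕ} (S : Finset (EuclideanSpace ℝ (Fin d))) :
    {r : ℝ | ∃ p ∈ S, ∃ q ∈ S, p ≠ q ∧ r = dist p q}.Finite := by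
  apply Set.Finite.subset (Set.Finite.image (fun pq => dist pq.1 pq.2)
    (S.finite_toSet.prod S.finite_toSet))
  rintro r ⟨p, hp, q, hq, hpq, rfl⟩
  exact ⟨(p, q), ⟨hp, hq⟩, rfl⟩

lemma distSet_nonempty {d : ℕ} {S : Finset (EuclideanSpace ℝ (Fin d))} (h : 2 ≤ S.card) :
    {r : ℝ | ∃ p ∈ S, ∃ q ∈ S, p ≠ q ∧ r = dist p q}.Nonempty := by
  obtain ⟨p, hp, q, hq, hpq⟩ := Finset.one_lt_card.mp h
  exact ⟨dist p q, p, hp, q, hq, hpq, rfl⟩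

lemma minDist_mem {d : ℕ} {S : Finset (EuclideanSpace ℝ (Fin d))} (h : 2 ≤ S.card) :
    ∃ p ∈ S, ∃ q ∈ S, p ≠ q ∧ minDist S = dist p q :=
  (distSet_nonempty h).csInf_mem (distSet_finite S)

lemma minDist_le {d : ℕ} {S : Finset (EuclideanSpace ℝ (Fin d))}
    {p q : EuclideanSpace ℝ (Fin d)} (hp : p ∈ S) (hq : q ∈ S) (hpq : p ≠ q) :
    minDist S ≤ dist p q :=
  csInf_le (distSet_finite S).bddBelow ⟨p, hp, q, hq, hpq, rfl⟩

lemma le_minDist {d : ℕ} {S : Finset (EuclideanSpace ℝ (Fin d))} {c : ℝ} (h : 2 ≤ S.card)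
    (H : ∀ p ∈ S, ∀ q ∈ S, p ≠ q → c ≤ dist p q) : c ≤ minDist S := by
  apply le_csInf (distSet_nonempty h)
  rintro r ⟨p, hp, q, hq, hpq, rfl⟩
  exact H p hp q hq hpq

lemma dispSet_finite {d : ℕ} (P : Finset (EuclideanSpace ℝ (Fin d))) (k : ℕ) :
    {r : ℝ | ∃ S ⊆ P, S.card = k ∧ r = minDist S}.Finite := by
  apply Set.Finite.subset (Set.Finite.image minDist P.powerset.finite_toSet)
  rintro r ⟨S, hS, hcard, rfl⟩
  exact ⟨S, Finset.mem_powerset.mpr hS, rfl⟩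

lemma dispSet_nonempty {d : ℕ} {P : Finset (EuclideanSpace ℝ (Fin d))} {k : ℕ}
    (h : k ≤ P.card) : {r : ℝ | ∃ S ⊆ P, S.card = k ∧ r = minDist S}.Nonempty := by
  obtain ⟨S, hS, hcard⟩ := Finset.exists_subset_card_eq h
  exact ⟨minDist S, S, hS, hcard, rfl⟩

lemma disp_mem {d : ℕ} {P : Finset (EuclideanSpace ℝ (Fin d))} {k : ℕ} (h : k ≤ P.card) :
    ∃ S ⊆ P, S.card = k ∧ disp P k = minDist S :=
  (dispSet_nonempty h).csSup_mem (dispSet_finite P k)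

lemma le_disp {d : ℕ} {P : Finset (EuclideanSpace ℝ (Fin d))} {k : ℕ}
    {S : Finset (EuclideanSpace ℝ (Fin d))} (hS : S ⊆ P) (hcard : S.card = k) :
    minDist S ≤ disp P k :=
  le_csSup (dispSet_finite P k).bddAbove ⟨S, hS, hcard, rfl⟩

theorem recursive_algorithm_correctness
    (d : ℕ) (hd : 1 ≤ d) (P : Finset (EuclideanSpace ℝ (Fin d))) (k : ℕ)
    (hk : 4 ≤ k) (hkP : k ≤ P.card) :
    (∃ a ∈ P, ∃ b ∈ P, a ≠ b ∧ GoodPair P k a b) ∧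
      IsGreatest {r : ℝ | ∃ a ∈ P, ∃ b ∈ P, a ≠ b ∧ GoodPair P k a b ∧ r = dist a b}
        (disp P k) := by
  obtain ⟨S, hSP, hScard, hdisp⟩ := disp_mem hkP
  have hS2 : 2 ≤ S.card := by omega
  obtain ⟨a, ha, b, hb, hab, hmin⟩ := minDist_mem hS2
  -- construct the good pair from S
  set K' : Finset (EuclideanSpace ℝ (Fin d)) := (S.erase a).erase b with hK'
  have hK'sub : K' ⊆ S := (Finset.erase_subset _ _).trans (Finset.erase_subset _ _)
  have hbmem : b ∈ S.erase a := Finset.mem_erase.mpr ⟨hab.symm, hb⟩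
  have hK'card : K'.card = k - 2 := by
    rw [hK', Finset.card_erase_of_mem hbmem, Finset.card_erase_of_mem ha, hScard]
    omega
  have haK' : a ∉ K' := fun h => (Finset.mem_erase.mp (Finset.mem_of_mem_erase h)).1 rfl
  have hbK' : b ∉ K' := fun h => (Finset.mem_erase.mp h).1 rfl
  have hgood : GoodPair P k a b := by
    refine ⟨K', ?_, hK'card, ?_⟩
    · intro p hp
      have hpS := hK'sub hp
      have hpa : p ≠ a := (Finset.mem_erase.mp (Finset.mem_of_mem_erase hp)).1
      have hpb : p ≠ b := (Finset.mem_erase.mp hp).1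
      refine Finset.mem_filter.mpr ⟨hSP hpS, ?_, ?_⟩
      · rw [← hmin]; exact minDist_le hpS ha hpa
      · rw [← hmin]; exact minDist_le hpS hb hpb
    · apply le_minDist (by omega)
      intro p hp q hq hpq
      rw [← hmin]
      exact minDist_le (hK'sub hp) (hK'sub hq) hpq
  have hdab : disp P k = dist a b := by rw [hdisp, hmin]
  refine ⟨⟨a, hSP ha, b, hSP hb, hab, hgood⟩, ⟨⟨a, hSP ha, b, hSP hb, hab, hgood, hdab⟩, ?_⟩⟩
  rintro r ⟨a, ha, b, hb, hab, ⟨K, hKsub, hKcard, hKmin⟩, rfl⟩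
  have haK : a ∉ K := by
    intro h
    have := (Finset.mem_filter.mp (hKsub h)).2.1
    rw [dist_self] at this
    exact hab (dist_le_zero.mp this)
  have hbK : b ∉ K := by
    intro h
    have := (Finset.mem_filter.mp (hKsub h)).2.2
    rw [dist_self] at this
    exact hab (dist_le_zero.mp this)
  set T : Finset (EuclideanSpace ℝ (Fin d)) := insert a (insert b K) with hT
  have haT : a ∉ insert b K := by simp [hab, haK]
  have hTcard : T.card = k := by
    rw [hT, Finset.card_insert_of_notMem haT, Finset.card_insert_of_notMem hbK, hKcard]
    omega
  have hTsub : T ⊆ P := by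
    intro p hp
    rcases Finset.mem_insert.mp hp with rfl | hp
    · exact ha
    rcases Finset.mem_insert.mp hp with rfl | hp
    · exact hb
    · exact (Finset.mem_filter.mp (hKsub hp)).1
  have hfilt : ∀ p ∈ K, dist a b ≤ dist p a ∧ dist a b ≤ dist p b :=
    fun p hp => (Finset.mem_filter.mp (hKsub hp)).2
  have hTmin : dist a b ≤ minDist T := by
    apply le_minDist (by omega)
    intro p hp q hq hpq
    simp only [hT, Finset.mem_insert] at hp hq
    rcases hp with rfl | rfl | hp <;> rcases hq with rfl | rfl | hq
    · exact absurd rfl hpq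
    · exact le_refl _
    · rw [dist_comm p q]; exact (hfilt q hq).1
    · rw [dist_comm p q]
    · exact absurd rfl hpq
    · rw [dist_comm p q]; exact (hfilt q hq).2
    · exact (hfilt p hp).1
    · exact (hfilt p hp).2
    · exact le_trans hKmin (minDist_le hp hq hpq)
  calc dist a b ≤ minDist T := hTmin
    _ ≤ disp P k := le_disp hTsub hTcard
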